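/- Let E be a Hausdorff real locally convex topological vector space equipped with a biorthogonal system (e_n)_{n≥1}, (e*_n)_{n≥1}, where (e_n)_{n≥1} is a topological basis of E. Let f : E → ℝ be a convex continuous function. Then f is Gâteaux-differentiable at a point x* ∈ E if and only if the directional derivative f'(x*; e_n) exists for every n ≥ 1. In that case, the Gâteaux derivative is given by df(x*)(h) = Σ_{n=1}^{∞} f'(x*; e_n) ⟨e*_n, h⟩ for all h ∈ E. -/

import Mathlib

open Filter Topology

/-- `f` has directional derivative `L` at `x` in the direction `h`:
`f'(x; h) := lim_{t→0, t≠0} (f(x + t h) − f(x))/t = L`. -/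
def HasDirDeriv {E : Type*} [AddCommGroup E] [Module ℝ E] (f : E → ℝ) (x h : E) (L : ℝ) : Prop :=
  Tendsto (fun t : ℝ => (f (x + t • h) - f x) / t) (𝓝[≠] (0 : ℝ)) (𝓝 L)

/-- `f` is Gâteaux-differentiable at `x`: there is a continuous linear functional `F` with
`f'(x; h) = F h` for all directions `h`. -/
def GateauxDiffAt {E : Type*} [AddCommGroup E] [Module ℝ E] [TopologicalSpace E]
    (f : E → ℝ) (x : E) : Prop :=
  ∃ F : E →L[ℝ] ℝ, ∀ h : E, HasDirDeriv f x h (F h)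

section Aux
open Set
variable {E : Type*} [AddCommGroup E] [Module ℝ E]

/-- difference quotient -/
noncomputable def qq (f : E → ℝ) (xs h : E) (t : ℝ) : ℝ := (f (xs + t • h) - f xs) / t

/-- right derivative -/
noncomputable def dd (f : E → ℝ) (xs h : E) : ℝ := sInf (qq f xs h '' Set.Ioi 0)

variable {f : E → ℝ} {xs : E} (hconv : ConvexOn ℝ Set.univ f)
include hconv

lemma qq_mono (h : E) : ∀ ⦃s t : ℝ⦄, s ≠ 0 → t ≠ 0 → s ≤ t → qq f xs h s ≤ qq f xs h t := by
  intro s t hs ht hst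
  have hg : ConvexOn ℝ (Set.univ : Set ℝ) (f ∘ (AffineMap.lineMap xs (xs + h) : ℝ →ᵃ[ℝ] E)) := by
    have := hconv.comp_affineMap (AffineMap.lineMap xs (xs + h))
    simpa using this
  have hm := hg.slope_mono (Set.mem_univ (0 : ℝ))
  have key := hm (show s ∈ Set.univ \ {0} by simp [hs]) (show t ∈ Set.univ \ {0} by simp [ht]) hst
  have heval : ∀ u : ℝ, slope (f ∘ (AffineMap.lineMap xs (xs + h) : ℝ →ᵃ[ℝ] E)) 0 u
      = qq f xs h u := by
    intro u
    rw [slope_def_field]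
    simp [qq, AffineMap.lineMap_apply, add_comm]
  rwa [heval, heval] at key

lemma qq_bdd (h : E) : BddBelow (qq f xs h '' Set.Ioi 0) := by
  refine ⟨qq f xs h (-1), ?_⟩
  rintro y ⟨t, ht, rfl⟩
  exact qq_mono hconv h (by norm_num) (ne_of_gt ht) (by linarith [Set.mem_Ioi.1 ht])

lemma dd_le (h : E) {t : ℝ} (ht : 0 < t) : dd f xs h ≤ qq f xs h t :=
  csInf_le (qq_bdd hconv h) (Set.mem_image_of_mem _ ht)

lemma tendsto_qq (h : E) : Tendsto (qq f xs h) (𝓝[>] 0) (𝓝 (dd f xs h)) := by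
  have hm : MonotoneOn (qq f xs h) (Set.Ioi (0 : ℝ)) := fun a ha b hb hab =>
    qq_mono hconv h (ne_of_gt ha) (ne_of_gt hb) hab
  exact hm.tendsto_nhdsGT (qq_bdd hconv h)

omit hconv in
lemma qq_neg_eq (h : E) (t : ℝ) : qq f xs h t = -(qq f xs (-h) (-t)) := by
  simp only [qq, smul_neg, neg_smul, neg_neg, div_neg]

lemma tendsto_qq_left (h : E) :
    Tendsto (qq f xs h) (𝓝[<] 0) (𝓝 (-(dd f xs (-h)))) := by
  have hneg : Tendsto (fun t : ℝ => -t) (𝓝[<] (0:ℝ)) (𝓝[>] (0:ℝ)) := by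
    refine tendsto_nhdsWithin_of_tendsto_nhds_of_eventually_within _ ?_ ?_
    · exact (continuous_neg.tendsto' 0 0 neg_zero).mono_left nhdsWithin_le_nhds
    · filter_upwards [self_mem_nhdsWithin] with t ht
      exact Set.mem_Ioi.2 (by simpa using Set.mem_Iio.1 ht)
  have := (((tendsto_qq hconv (-h)).comp hneg).neg :
    Tendsto (fun t : ℝ => -(qq f xs (-h) (-t))) (𝓝[<] 0) (𝓝 (-(dd f xs (-h)))))
  exact this.congr fun t => (qq_neg_eq h t).symm

lemma dd_add (a b : E) : dd f xs (a + b) ≤ dd f xs a + dd f xs b := by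
  have h2 : Tendsto (fun t : ℝ => 2 * t) (𝓝[>] (0:ℝ)) (𝓝[>] (0:ℝ)) := by
    refine tendsto_nhdsWithin_of_tendsto_nhds_of_eventually_within _ ?_ ?_
    · exact ((continuous_const.mul continuous_id).tendsto' 0 0 (by simp)).mono_left
        nhdsWithin_le_nhds
    · filter_upwards [self_mem_nhdsWithin] with t ht
      exact Set.mem_Ioi.2 (by linarith [Set.mem_Ioi.1 ht])
  have hlim : Tendsto (fun t : ℝ => qq f xs a (2 * t) + qq f xs b (2 * t)) (𝓝[>] 0)
      (𝓝 (dd f xs a + dd f xs b)) :=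
    ((tendsto_qq hconv a).comp h2).add ((tendsto_qq hconv b).comp h2)
  refine ge_of_tendsto hlim ?_
  filter_upwards [self_mem_nhdsWithin] with t ht
  have ht' : (0:ℝ) < t := Set.mem_Ioi.1 ht
  have hc := hconv.2 (Set.mem_univ (xs + (2*t) • a)) (Set.mem_univ (xs + (2*t) • b))
    (by norm_num : (0:ℝ) ≤ 1/2) (by norm_num : (0:ℝ) ≤ 1/2) (by norm_num)
  have hpt : (1/2 : ℝ) • (xs + (2*t) • a) + (1/2 : ℝ) • (xs + (2*t) • b)
      = xs + t • (a + b) := by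
    rw [smul_add, smul_add, smul_smul, smul_smul, smul_add]
    rw [show (1/2 : ℝ) * (2*t) = t by ring]
    module
  rw [hpt] at hc
  simp only [smul_eq_mul] at hc
  have step : qq f xs (a + b) t ≤ qq f xs a (2*t) + qq f xs b (2*t) := by
    have h2t : (0:ℝ) < 2*t := by linarith
    unfold qq
    rw [← add_div, div_le_div_iff₀ ht' h2t]
    nlinarith [mul_le_mul_of_nonneg_left hc (le_of_lt ht')]
  exact le_trans (dd_le hconv (a + b) ht') step

omit hconv in
lemma qq_zero_dir (t : ℝ) : qq f xs (0 : E) t = 0 := by simp [qq]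

lemma dd_zero : dd f xs (0 : E) = 0 := by
  have h1 : Tendsto (qq f xs (0:E)) (𝓝[>] 0) (𝓝 (dd f xs (0:E))) := tendsto_qq hconv 0
  have h2 : Tendsto (qq f xs (0:E)) (𝓝[>] (0:ℝ)) (𝓝 0) :=
    tendsto_const_nhds.congr fun t => (qq_zero_dir t).symm
  exact tendsto_nhds_unique h1 h2

lemma dd_smul_pos (h : E) {c : ℝ} (hc : 0 < c) : dd f xs (c • h) = c * dd f xs h := by
  have hmap : Tendsto (fun t : ℝ => c * t) (𝓝[>] (0:ℝ)) (𝓝[>] (0:ℝ)) := by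
    refine tendsto_nhdsWithin_of_tendsto_nhds_of_eventually_within _ ?_ ?_
    · exact ((continuous_const.mul continuous_id).tendsto' 0 0 (by simp)).mono_left
        nhdsWithin_le_nhds
    · filter_upwards [self_mem_nhdsWithin] with t ht
      exact Set.mem_Ioi.2 (mul_pos hc (Set.mem_Ioi.1 ht))
  have h1 : Tendsto (fun t : ℝ => c * qq f xs h (c * t)) (𝓝[>] 0) (𝓝 (c * dd f xs h)) :=
    ((tendsto_qq hconv h).comp hmap).const_mul c
  have h2 : Tendsto (qq f xs (c • h)) (𝓝[>] 0) (𝓝 (dd f xs (c • h))) := tendsto_qq hconv _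
  refine tendsto_nhds_unique h2 (h1.congr ?_)
  intro t
  unfold qq
  rw [smul_smul, mul_comm t c]
  rcases eq_or_ne t 0 with rfl | ht
  · simp
  · field_simp


lemma dd_le_f (h : E) : dd f xs h ≤ f (xs + h) - f xs := by
  have := dd_le (xs := xs) hconv h one_pos
  simpa [qq] using this

lemma dd_nonneg_two (h : E) : 0 ≤ dd f xs h + dd f xs (-h) := by
  have h1 := dd_add (xs := xs) hconv h (-h)
  rw [add_neg_cancel, dd_zero hconv] at h1
  linarith

lemma dd_smul_zero_pair {x : E} (hx : dd f xs x + dd f xs (-x) = 0) (c : ℝ) :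
    dd f xs (c • x) + dd f xs (-(c • x)) = 0 := by
  rcases lt_trichotomy c 0 with hc | rfl | hc
  · have h1 : c • x = (-c) • (-x) := by rw [neg_smul, smul_neg, neg_neg]
    have h2 : -(c • x) = (-c) • x := by rw [neg_smul]
    rw [h2, h1, dd_smul_pos hconv (-x) (by linarith), dd_smul_pos hconv x (by linarith)]
    linear_combination (-c) * hx
  · rw [zero_smul, neg_zero, dd_zero hconv]
    norm_num
  · have h2 : -(c • x) = c • (-x) := by rw [smul_neg]
    rw [h2, dd_smul_pos hconv x hc, dd_smul_pos hconv (-x) hc]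
    linear_combination c * hx

lemma dd_pair_add {x y : E} (hx : dd f xs x + dd f xs (-x) = 0)
    (hy : dd f xs y + dd f xs (-y) = 0) :
    dd f xs (x + y) + dd f xs (-(x + y)) = 0 := by
  have h1 := dd_add (xs := xs) hconv x y
  have h2 := dd_add (xs := xs) hconv (-x) (-y)
  rw [← neg_add] at h2
  have h3 := dd_nonneg_two (xs := xs) hconv (x + y)
  linarith

lemma hasDir_dd (h : E) (hz : dd f xs (-h) = - dd f xs h) :
    HasDirDeriv f xs h (dd f xs h) := by
  unfold HasDirDeriv
  rw [← nhdsLT_sup_nhdsGT, tendsto_sup]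
  refine ⟨?_, tendsto_qq hconv h⟩
  have := tendsto_qq_left (xs := xs) hconv h
  rwa [hz, neg_neg] at this

lemma dir_eq_dd {h : E} {L : ℝ} (hd : HasDirDeriv f xs h L) :
    dd f xs h = L ∧ dd f xs (-h) = -L := by
  have hsub1 : (𝓝[>] (0:ℝ)) ≤ 𝓝[≠] (0:ℝ) := nhdsWithin_mono 0 fun t ht => ne_of_gt ht
  have hsub2 : (𝓝[<] (0:ℝ)) ≤ 𝓝[≠] (0:ℝ) := nhdsWithin_mono 0 fun t ht => ne_of_lt ht
  have hr : Tendsto (qq f xs h) (𝓝[>] 0) (𝓝 L) := hd.mono_left hsub1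
  have hl : Tendsto (qq f xs h) (𝓝[<] 0) (𝓝 L) := hd.mono_left hsub2
  have h1 : dd f xs h = L := tendsto_nhds_unique (tendsto_qq hconv h) hr
  have h2 : -(dd f xs (-h)) = L := tendsto_nhds_unique (tendsto_qq_left hconv h) hl
  exact ⟨h1, by linarith⟩

end Aux

/-- **Theorem 2.** Let `E` be a Hausdorff real locally convex topological vector space with a
biorthogonal system `(e_n), (e*_n)` where `(e_n)` is a topological basis, and let `f : E → ℝ`
be convex and continuous.  Then `f` is Gâteaux-differentiable at `x*` iff `f'(x*; e_n)` exists
for every `n`; and in that case `df(x*)(h) = ∑_{n} f'(x*; e_n) ⟨e*_n, h⟩` for all `h`. -/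
theorem statement1 {E : Type*} [AddCommGroup E] [Module ℝ E] [TopologicalSpace E]
    [IsTopologicalAddGroup E] [ContinuousSMul ℝ E] [T2Space E] [LocallyConvexSpace ℝ E]
    (e : ℕ → E) (estar : ℕ → E →L[ℝ] ℝ)
    (hbo1 : ∀ n, estar n (e n) = 1)
    (hbo2 : ∀ n m, n ≠ m → estar n (e m) = 0)
    -- `(e_n)` is a topological basis of `E`
    (hbasis : ∀ x : E, ∃! a : ℕ → ℝ,
      Tendsto (fun k : ℕ => ∑ n ∈ Finset.range k, a n • e n) atTop (𝓝 x))
    (f : E → ℝ) (hconv : ConvexOn ℝ Set.univ f) (hcont : Continuous f)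
    (xs : E) :
    (GateauxDiffAt f xs ↔ ∀ n : ℕ, ∃ L : ℝ, HasDirDeriv f xs (e n) L) ∧
      (∀ F : E →L[ℝ] ℝ, (∀ h : E, HasDirDeriv f xs h (F h)) →
        ∀ h : E, Tendsto (fun K : ℕ => ∑ n ∈ Finset.range K, F (e n) * estar n h)
          atTop (𝓝 (F h))) := by
  constructor
  · constructor
    · rintro ⟨F, hF⟩ n
      exact ⟨F (e n), hF (e n)⟩
    · intro H
      have pz_e : ∀ n, dd f xs (e n) + dd f xs (-(e n)) = 0 := by
        intro n
        obtain ⟨L, hL⟩ := H n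
        obtain ⟨h1, h2⟩ := dir_eq_dd hconv hL
        rw [h1, h2]; ring
      have psum : ∀ (a : ℕ → ℝ) (k : ℕ),
          dd f xs (∑ n ∈ Finset.range k, a n • e n)
            + dd f xs (-(∑ n ∈ Finset.range k, a n • e n)) = 0 := by
        intro a k
        induction k with
        | zero => simp [dd_zero hconv]
        | succ k ih =>
          rw [Finset.sum_range_succ]
          exact dd_pair_add hconv ih (dd_smul_zero_pair hconv (pz_e k) (a k))
      have pzero : ∀ h : E, dd f xs h + dd f xs (-h) = 0 := by
        intro h
        obtain ⟨a, ha, -⟩ := hbasis h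
        set S : ℕ → E := fun k => ∑ n ∈ Finset.range k, a n • e n with hS
        have hub : ∀ k, dd f xs h + dd f xs (-h)
            ≤ (f (xs + (h - S k)) - f xs) + (f (xs + -(h - S k)) - f xs) := by
          intro k
          have hh : h = (h - S k) + S k := by abel
          have t1 : dd f xs h ≤ dd f xs (h - S k) + dd f xs (S k) := by
            nth_rewrite 1 [hh]; exact dd_add hconv _ _
          have t2 : dd f xs (-h) ≤ dd f xs (-(h - S k)) + dd f xs (-(S k)) := by
            nth_rewrite 1 [hh]; rw [neg_add]; exact dd_add hconv _ _
          have t3 := psum a k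
          have t4 := dd_le_f hconv (xs := xs) (h - S k)
          have t5 := dd_le_f hconv (xs := xs) (-(h - S k))
          rw [← sub_eq_add_neg] at t5
          have t5' : dd f xs (-(h - S k)) ≤ f (xs + -(h - S k)) - f xs := by
            have := dd_le_f hconv (xs := xs) (-(h - S k)); exact this
          change dd f xs (S k) + dd f xs (-(S k)) = 0 at t3
          linarith
        have hS_lim : Tendsto (fun k => h - S k) atTop (𝓝 0) := by
          have := (tendsto_const_nhds (x := h) (f := atTop)).sub ha
          simpa [hS] using this
        have hcontmap : Tendsto (fun u : E => (f (xs + u) - f xs) + (f (xs + -u) - f xs))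
            (𝓝 0) (𝓝 0) := by
          have c1 : Continuous fun u : E => (f (xs + u) - f xs) + (f (xs + -u) - f xs) :=
            ((hcont.comp (continuous_const.add continuous_id)).sub continuous_const).add
              ((hcont.comp (continuous_const.add continuous_id.neg)).sub continuous_const)
          have := c1.tendsto 0
          simpa using this
        have hlim := hcontmap.comp hS_lim
        have hle : dd f xs h + dd f xs (-h) ≤ 0 :=
          ge_of_tendsto hlim (Eventually.of_forall hub)
        linarith [dd_nonneg_two hconv (xs := xs) h]
      have dd_neg : ∀ h : E, dd f xs (-h) = - dd f xs h := fun h => by linarith [pzero h]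
      have map_add' : ∀ x y : E, dd f xs (x + y) = dd f xs x + dd f xs y := by
        intro x y
        have h1 := dd_add hconv (xs := xs) x y
        have h2 := dd_add hconv (xs := xs) (-x) (-y)
        rw [← neg_add, dd_neg, dd_neg, dd_neg] at h2
        linarith
      have map_smul' : ∀ (c : ℝ) (x : E), dd f xs (c • x) = c * dd f xs x := by
        intro c x
        rcases lt_trichotomy c 0 with hc | rfl | hc
        · have h1 : c • x = (-c) • (-x) := by rw [neg_smul, smul_neg, neg_neg]
          rw [h1, dd_smul_pos hconv (-x) (by linarith), dd_neg]; ring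
        · rw [zero_smul, dd_zero hconv, zero_mul]
        · exact dd_smul_pos hconv x hc
      set F0 : E →ₗ[ℝ] ℝ :=
        { toFun := dd f xs
          map_add' := map_add'
          map_smul' := fun c x => by simpa using map_smul' c x } with hF0
      have hcontF : Continuous F0 := by
        apply continuous_of_continuousAt_zero F0
        rw [ContinuousAt, map_zero]
        have hup : Tendsto (fun h : E => f (xs + h) - f xs) (𝓝 0) (𝓝 0) := by
          have c1 : Continuous fun h : E => f (xs + h) - f xs :=
            (hcont.comp (continuous_const.add continuous_id)).sub continuous_const
          simpa using c1.tendsto 0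
        have hlo : Tendsto (fun h : E => f xs - f (xs + -h)) (𝓝 0) (𝓝 0) := by
          have c1 : Continuous fun h : E => f xs - f (xs + -h) :=
            continuous_const.sub (hcont.comp (continuous_const.add continuous_id.neg))
          simpa using c1.tendsto 0
        refine tendsto_of_tendsto_of_tendsto_of_le_of_le hlo hup ?_ ?_
        · intro h
          have t1 := dd_le_f hconv (xs := xs) (-h)
          have hn := dd_neg h
          show f xs - f (xs + -h) ≤ F0 h
          show f xs - f (xs + -h) ≤ dd f xs h
          linarith
        · intro h
          exact dd_le_f hconv (xs := xs) h
      exact ⟨⟨F0, hcontF⟩, fun h => hasDir_dd hconv h (dd_neg h)⟩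
  · intro F hF h
    obtain ⟨a, ha, -⟩ := hbasis h
    have acoef : ∀ m, a m = estar m h := by
      intro m
      have h1 : Tendsto (fun k => estar m (∑ n ∈ Finset.range k, a n • e n)) atTop
          (𝓝 (estar m h)) := ((estar m).continuous.tendsto h).comp ha
      have h2 : ∀ᶠ k in atTop,
          estar m (∑ n ∈ Finset.range k, a n • e n) = a m := by
        filter_upwards [eventually_ge_atTop (m + 1)] with k hk
        rw [map_sum, Finset.sum_eq_single_of_mem m (Finset.mem_range.2 (by omega))]
        · rw [map_smul, hbo1, smul_eq_mul, mul_one]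
        · intro n _ hn
          rw [map_smul, hbo2 m n (Ne.symm hn), smul_eq_mul, mul_zero]
      have h3 : Tendsto (fun k => estar m (∑ n ∈ Finset.range k, a n • e n)) atTop
          (𝓝 (a m)) := Tendsto.congr' (h2.mono fun k hk => hk.symm) tendsto_const_nhds
      exact tendsto_nhds_unique h3 h1
    have key : Tendsto (fun k => F (∑ n ∈ Finset.range k, a n • e n)) atTop (𝓝 (F h)) :=
      (F.continuous.tendsto h).comp ha
    refine key.congr fun k => ?_
    rw [map_sum]
    refine Finset.sum_congr rfl fun n _ => ?_
    rw [map_smul, smul_eq_mul, acoef n, mul_comm]
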